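/- arXiv:1011.5695 — 4 statements merged into one kernel-verified Lean document; each statement's English description precedes it below -/
import Mathlib

section
/- Fix n ≥ 1 and J ∈ ℕ, and families (Â₁,_m), (Â₀,_m), (B̂₀,_m) of n×n complex matrices with ℬ₀,J invertible, in the notation below. Then the function λ ↦ D_J(λ) := det(I − 𝒦_J(λ))·exp(tr 𝒦_J(λ)) is analytic on all of ℂ, and for every λ₀ ∈ ℂ, the order of vanishing of D_J at λ₀ equals the algebraic multiplicity of λ₀ as an eigenvalue of the matrix L_J, i.e., equals the root multiplicity of λ₀ in the characteristic polynomial of L_J. -/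
open Complex Matrix

def jv (J : ℕ) (a : Fin (2 * J + 1)) : ℤ := ((a : ℕ) : ℤ) - (J : ℤ)

def blockToeplitz (J n : ℕ) (A : ℤ → Matrix (Fin n) (Fin n) ℂ) :
    Matrix (Fin (2 * J + 1) × Fin n) (Fin (2 * J + 1) × Fin n) ℂ :=
  fun p q => A (jv J p.1 - jv J q.1) p.2 q.2

noncomputable def fourierD (J n : ℕ) :
    Matrix (Fin (2 * J + 1) × Fin n) (Fin (2 * J + 1) × Fin n) ℂ :=
  Matrix.diagonal fun p => Complex.I * ((jv J p.1 : ℤ) : ℂ)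

noncomputable def KJ (J n : ℕ) (A1 A0 B0 : ℤ → Matrix (Fin n) (Fin n) ℂ) (lam : ℂ) :
    Matrix (Fin (2 * J + 1) × Fin n) (Fin (2 * J + 1) × Fin n) ℂ :=
  -(((fourierD J n) ^ 2 - 1)⁻¹ *
    (fourierD J n * blockToeplitz J n A1 +
      (blockToeplitz J n A0 - lam • blockToeplitz J n B0) + 1))

/-- The truncated Birman–Schwinger Evans function `D_J(λ) = det(I−𝒦_J(λ)) e^{tr 𝒦_J(λ)}`. -/
noncomputable def DJ (J n : ℕ) (A1 A0 B0 : ℤ → Matrix (Fin n) (Fin n) ℂ) (lam : ℂ) : ℂ :=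
  (1 - KJ J n A1 A0 B0 lam).det * Complex.exp ((KJ J n A1 A0 B0 lam).trace)

/-- Evaluation of the characteristic polynomial. -/
lemma my_eval_charpoly {m : Type*} [DecidableEq m] [Fintype m]
    (A : Matrix m m ℂ) (lam : ℂ) :
    A.charpoly.eval lam = (lam • (1 : Matrix m m ℂ) - A).det := by
  rw [Matrix.charpoly, ← Polynomial.coe_evalRingHom, RingHom.map_det]
  congr 1
  ext i j
  by_cases h : i = j
  · subst h
    simp [Matrix.charmatrix_apply_eq, Matrix.one_apply]
  · simp [Matrix.charmatrix_apply_ne _ _ _ h, Matrix.one_apply, h]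

/-- `D_J` is entire, and its order of vanishing at any `z₀` equals
the algebraic multiplicity of `z₀` as an eigenvalue of the Hill matrix `L_J`,
i.e. the root multiplicity of `z₀` in the characteristic polynomial of `L_J`. -/
theorem truncated_evans_analytic_and_multiplicity
    (n : ℕ) (hn : 1 ≤ n) (J : ℕ)
    (A1 A0 B0 : ℤ → Matrix (Fin n) (Fin n) ℂ)
    (hB : IsUnit (blockToeplitz J n B0))
    (LJ : Matrix (Fin (2 * J + 1) × Fin n) (Fin (2 * J + 1) × Fin n) ℂ)
    (hLJ : LJ = (blockToeplitz J n B0)⁻¹ *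
      ((fourierD J n) ^ 2 + fourierD J n * blockToeplitz J n A1 + blockToeplitz J n A0)) :
    ∃ h : ∀ z : ℂ, AnalyticAt ℂ (DJ J n A1 A0 B0) z,
      ∀ z₀ : ℂ, analyticOrderAt (DJ J n A1 A0 B0) z₀ = ((LJ.charpoly.rootMultiplicity z₀ : ℕ) : ℕ∞) := by
  classical
  set M := fourierD J n with hM
  set T1 := blockToeplitz J n A1 with hT1
  set T0 := blockToeplitz J n A0 with hT0
  set B := blockToeplitz J n B0 with hTB
  set E := M ^ 2 - 1 with hE
  -- E is a diagonal matrix with nonzero entries, hence invertible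
  have hEdiag : E = Matrix.diagonal (fun p => -(((jv J p.1 ^ 2 + 1 : ℤ) : ℂ))) := by
    have hfun : (fun p : Fin (2 * J + 1) × Fin n =>
        (Complex.I * ((jv J p.1 : ℤ) : ℂ)) * (Complex.I * ((jv J p.1 : ℤ) : ℂ)) - 1)
        = fun p => -(((jv J p.1 ^ 2 + 1 : ℤ) : ℂ)) := by
      funext p
      have h4 : (Complex.I * ((jv J p.1 : ℤ) : ℂ)) * (Complex.I * ((jv J p.1 : ℤ) : ℂ))
          = Complex.I ^ 2 * ((jv J p.1 : ℤ) : ℂ) ^ 2 := by ring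
      rw [h4, Complex.I_sq]
      push_cast
      ring
    rw [hE, hM, fourierD, sq, Matrix.diagonal_mul_diagonal, ← Matrix.diagonal_one,
      Matrix.diagonal_sub, hfun]
  have hent : ∀ p : Fin (2 * J + 1) × Fin n, (-(((jv J p.1 ^ 2 + 1 : ℤ) : ℂ))) ≠ 0 := by
    intro p
    rw [neg_ne_zero, Int.cast_ne_zero]
    positivity
  have hEdet : IsUnit E.det := by
    rw [hEdiag, Matrix.det_diagonal]
    rw [isUnit_iff_ne_zero]
    exact Finset.prod_ne_zero_iff.2 fun p _ => hent p
  have hBdet : IsUnit B.det := (Matrix.isUnit_iff_isUnit_det _).mp hB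
  -- key factorization:  1 - 𝒦(λ) = E⁻¹ * (B * (L - λ))
  have hBL : B * LJ = M ^ 2 + M * T1 + T0 := by
    rw [hLJ, ← Matrix.mul_assoc, Matrix.mul_nonsing_inv _ hBdet, Matrix.one_mul]
  have hone : ∀ lam : ℂ,
      1 - KJ J n A1 A0 B0 lam = E⁻¹ * (B * (LJ - lam • 1)) := by
    intro lam
    have h1 : B * (LJ - lam • 1) = M ^ 2 + M * T1 + T0 - lam • B := by
      rw [Matrix.mul_sub, hBL, Matrix.mul_smul, Matrix.mul_one]
    rw [h1]
    show 1 - -(E⁻¹ * (M * T1 + (T0 - lam • B) + 1)) = _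
    rw [sub_neg_eq_add]
    have hinv : E⁻¹ * E = 1 := Matrix.nonsing_inv_mul _ hEdet
    calc 1 + E⁻¹ * (M * T1 + (T0 - lam • B) + 1)
        = E⁻¹ * E + E⁻¹ * (M * T1 + (T0 - lam • B) + 1) := by rw [hinv]
      _ = E⁻¹ * (E + (M * T1 + (T0 - lam • B) + 1)) := (Matrix.mul_add _ _ _).symm
      _ = E⁻¹ * (M ^ 2 + M * T1 + T0 - lam • B) := by
          congr 1
          rw [hE]
          abel
  -- trace is affine in λ
  set t0 : ℂ := (-(E⁻¹ * (M * T1 + T0 + 1))).trace with ht0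
  set t1 : ℂ := (E⁻¹ * B).trace with ht1
  have htr : ∀ lam : ℂ, (KJ J n A1 A0 B0 lam).trace = t0 + lam * t1 := by
    intro lam
    have h2 : KJ J n A1 A0 B0 lam
        = -(E⁻¹ * (M * T1 + T0 + 1)) + lam • (E⁻¹ * B) := by
      show -(E⁻¹ * (M * T1 + (T0 - lam • B) + 1)) = _
      have h3 : M * T1 + (T0 - lam • B) + 1 = (M * T1 + T0 + 1) - lam • B := by abel
      rw [h3, Matrix.mul_sub, Matrix.mul_smul, neg_sub, sub_eq_neg_add]
    rw [h2, Matrix.trace_add, Matrix.trace_smul, ← ht0, ← ht1, smul_eq_mul]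
  -- determinant formula
  set N := Fintype.card (Fin (2 * J + 1) × Fin n) with hN
  set c : ℂ := E⁻¹.det * B.det * (-1 : ℂ) ^ N with hc
  have hdet : ∀ lam : ℂ,
      (1 - KJ J n A1 A0 B0 lam).det = c * LJ.charpoly.eval lam := by
    intro lam
    rw [hone lam, Matrix.det_mul, Matrix.det_mul, my_eval_charpoly]
    have : LJ - lam • 1 = -(lam • (1 : Matrix _ _ ℂ) - LJ) := by abel
    rw [this, Matrix.det_neg, hc]
    ring
  -- closed formula for DJ
  have hDJ : ∀ lam : ℂ,
      DJ J n A1 A0 B0 lam = c * LJ.charpoly.eval lam * Complex.exp (t0 + lam * t1) := by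
    intro lam
    rw [DJ, hdet lam, htr lam]
  have hc0 : c ≠ 0 := by
    rw [hc]
    have h1 : E⁻¹.det ≠ 0 := by
      rw [Matrix.det_nonsing_inv, Ring.inverse_eq_inv]
      exact inv_ne_zero hEdet.ne_zero
    have h2 : B.det ≠ 0 := hBdet.ne_zero
    have h3 : ((-1 : ℂ) ^ N) ≠ 0 := pow_ne_zero _ (by norm_num)
    exact mul_ne_zero (mul_ne_zero h1 h2) h3
  -- analyticity
  have hanal : ∀ z : ℂ, AnalyticAt ℂ (DJ J n A1 A0 B0) z := by
    intro z
    have hfun : DJ J n A1 A0 B0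
        = fun lam => c * LJ.charpoly.eval lam * Complex.exp (t0 + lam * t1) := by
      funext lam; exact hDJ lam
    rw [hfun]
    have hpoly : AnalyticAt ℂ (fun lam : ℂ => LJ.charpoly.eval lam) z := by
      have := (analyticAt_id (𝕜 := ℂ) (z := z)).aeval_polynomial (A := ℂ) LJ.charpoly
      simpa using this
    have hexp : AnalyticAt ℂ (fun lam : ℂ => Complex.exp (t0 + lam * t1)) z :=
      (analyticAt_const.add ((analyticAt_id).mul analyticAt_const)).cexp
    exact ((analyticAt_const.mul hpoly).mul hexp)
  refine ⟨hanal, fun z₀ => ?_⟩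
  set P := LJ.charpoly with hP
  have hPne : P ≠ 0 := LJ.charpoly_monic.ne_zero
  set m := P.rootMultiplicity z₀ with hm
  set q := P /ₘ (Polynomial.X - Polynomial.C z₀) ^ m with hq
  have hfac : (Polynomial.X - Polynomial.C z₀) ^ m * q = P :=
    P.pow_mul_divByMonic_rootMultiplicity_eq z₀
  have hq0 : q.eval z₀ ≠ 0 := Polynomial.eval_divByMonic_pow_rootMultiplicity_ne_zero z₀ hPne
  rw [(hanal z₀).analyticOrderAt_eq_natCast]
  refine ⟨fun lam => c * q.eval lam * Complex.exp (t0 + lam * t1), ?_, ?_, ?_⟩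
  · have hpoly : AnalyticAt ℂ (fun lam : ℂ => q.eval lam) z₀ := by
      have := (analyticAt_id (𝕜 := ℂ) (z := z₀)).aeval_polynomial (A := ℂ) q
      simpa using this
    exact (analyticAt_const.mul hpoly).mul
      ((analyticAt_const.add ((analyticAt_id).mul analyticAt_const)).cexp)
  · exact mul_ne_zero (mul_ne_zero hc0 hq0) (Complex.exp_ne_zero _)
  · filter_upwards with lam
    rw [hDJ lam]
    have : P.eval lam = (lam - z₀) ^ m * q.eval lam := by
      conv_lhs => rw [← hfac]
      simp [Polynomial.eval_mul, Polynomial.eval_pow]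
    rw [this, smul_eq_mul]
    ring
end

section
/- Fix n ≥ 1, J ∈ ℕ, λ ∈ ℂ. Let A₁ be continuously differentiable and A₀, B₀ continuous, all Mₙ(ℂ)-valued and 2π-periodic, with Fourier coefficients Â₁,_m, Â₀,_m, B̂₀,_m (f̂_m = (1/2π)∫₀^{2π} f(x)e^{−imx}dx). Let 𝔸(λ,x) = [[0, Iₙ],[λB₀(x) − A₀(x) − A₁′(x), −A₁(x)]] with Fourier coefficients 𝔸̂_m(λ), and let 𝒦̂_J(λ) be the block matrix of size (2J+1)·2n indexed by j,k ∈ {−J,…,J} with (j,k) block (ij − 1)^{-1}(𝔸̂_{j−k}(λ) − δ_{jk}I_{2n}); set F_J(λ) := det(I − 𝒦̂_J(λ))·exp(tr 𝒦̂_J(λ)). With 𝒟_J, 𝒜₁,J, 𝒜₀,J, ℬ₀,J the size-(2J+1)n block matrices of the second-order problem (𝒟_J block diagonal with blocks ij·Iₙ; the others block Toeplitz with blocks Â₁,_{j−k}, Â₀,_{j−k}, B̂₀,_{j−k}), assume ℬ₀,J is invertible and set L_J := ℬ₀,J^{-1}(𝒟_J² + 𝒟_J𝒜₁,J + 𝒜₀,J).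 Then ( det(𝒟_J − I_{(2J+1)n}) )² · F_J(λ) = det(ℬ₀,J) · exp(tr 𝒦̂_J(λ)) · det(L_J − λ·I). -/
open Complex Matrix

attribute [local instance] Matrix.normedAddCommGroup Matrix.normedSpace

/-- Entrywise Fourier coefficient of a matrix-valued `2π`-periodic function. -/
noncomputable def fc {k : Type*} (f : ℝ → Matrix k k ℂ) (m : ℤ) : Matrix k k ℂ :=
  fun i j => (2 * Real.pi : ℂ)⁻¹ *
    ∫ x in (0:ℝ)..(2 * Real.pi), f x i j * Complex.exp (-(Complex.I) * (m : ℂ) * x)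

/-- The first-order coefficient matrix
`𝔸(λ,x) = [[0, I],[λB₀ − A₀ − A₁′, −A₁]]` of the periodic eigenvalue problem. -/
noncomputable def firstOrderA {n : ℕ} (A1 A1' A0 B0 : ℝ → Matrix (Fin n) (Fin n) ℂ)
    (lam : ℂ) (x : ℝ) : Matrix (Fin n ⊕ Fin n) (Fin n ⊕ Fin n) ℂ :=
  Matrix.fromBlocks 0 1 (lam • B0 x - A0 x - A1' x) (-(A1 x))

/-- The truncated first-order Birman–Schwinger matrix `𝒦̂_J(λ)`, with `(j,k)` block
`(ij − 1)⁻¹ (𝔸̂_{j−k}(λ) − δ_{jk} I_{2n})`. -/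
noncomputable def KhatJ {n : ℕ} (J : ℕ) (A1 A1' A0 B0 : ℝ → Matrix (Fin n) (Fin n) ℂ)
    (lam : ℂ) :
    Matrix (Fin (2 * J + 1) × (Fin n ⊕ Fin n)) (Fin (2 * J + 1) × (Fin n ⊕ Fin n)) ℂ :=
  fun p q => (Complex.I * ((jv J p.1 : ℤ) : ℂ) - 1)⁻¹ *
    (fc (firstOrderA A1 A1' A0 B0 lam) (jv J p.1 - jv J q.1) p.2 q.2 -
      if p = q then 1 else 0)

/- ### Auxiliary lemmas -/

lemma expint (m : ℤ) : Complex.exp (-(Complex.I) * (m:ℂ) * (2*Real.pi)) = 1 := by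
  have := Complex.exp_int_mul_two_pi_mul_I (-m)
  rw [← this]; congr 1; push_cast; ring

lemma intexp (m : ℤ) : (∫ x in (0:ℝ)..(2*Real.pi), Complex.exp (-(Complex.I) * (m:ℂ) * x))
    = if m = 0 then (2*Real.pi : ℂ) else 0 := by
  by_cases hm : m = 0
  · subst hm
    simp [intervalIntegral.integral_const]
  · have hc : -(Complex.I) * (m:ℂ) ≠ 0 := by
      simp [Complex.I_ne_zero, Complex.ext_iff]
      exact_mod_cast hm
    rw [show (∫ x in (0:ℝ)..(2*Real.pi), Complex.exp (-(Complex.I) * (m:ℂ) * x))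
        = (∫ x in (0:ℝ)..(2*Real.pi), Complex.exp ((-(Complex.I) * (m:ℂ)) * x)) from by congr 1,
      integral_exp_mul_complex hc, if_neg hm]
    rw [show (-(Complex.I) * (m:ℂ)) * ((2*Real.pi : ℝ):ℂ) = -(Complex.I) * (m:ℂ) * (2*Real.pi) from by push_cast; ring]
    rw [expint m]
    simp

section Aux
variable {n : ℕ}

lemma deriv_entry {A A' : ℝ → Matrix (Fin n) (Fin n) ℂ} (h : ∀ x, HasDerivAt A (A' x) x)
    (i j : Fin n) (x : ℝ) : HasDerivAt (fun y => A y i j) (A' x i j) x := by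
  let L : Matrix (Fin n) (Fin n) ℂ →L[ℝ] ℂ :=
    (ContinuousLinearMap.proj j).comp
      (ContinuousLinearMap.proj (R := ℝ) (φ := fun _ : Fin n => Fin n → ℂ) i)
  exact (L.hasFDerivAt (x := A x)).comp_hasDerivAt x (h x)

lemma cont_entry {f : ℝ → Matrix (Fin n) (Fin n) ℂ} (hf : Continuous f) (i j : Fin n) :
    Continuous fun x => f x i j :=
  ((continuous_apply j).comp ((continuous_apply i).comp hf))

lemma hasDerivAt_cexp (m : ℤ) (x : ℝ) :
    HasDerivAt (fun y : ℝ => Complex.exp (-(Complex.I) * (m:ℂ) * y))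
      (-(Complex.I) * (m:ℂ) * Complex.exp (-(Complex.I) * (m:ℂ) * x)) x := by
  have h1 : HasDerivAt (fun y : ℝ => ((y : ℂ))) 1 x := by
    have h := Complex.ofRealCLM.hasDerivAt (x := x)
    exact h
  have h2 := h1.const_mul (-(Complex.I) * (m:ℂ))
  have h3 := (Complex.hasDerivAt_exp (-(Complex.I) * (m:ℂ) * x)).comp x h2
  rw [mul_one, mul_comm (Complex.exp _)] at h3
  exact h3

lemma fc_deriv {A A' : ℝ → Matrix (Fin n) (Fin n) ℂ} (h : ∀ x, HasDerivAt A (A' x) x)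
    (hA' : Continuous A') (hper : ∀ x, A (x + 2*Real.pi) = A x) (m : ℤ) (i j : Fin n) :
    fc A' m i j = Complex.I * (m:ℂ) * fc A m i j := by
  have hgc : Continuous fun x => A x i j := by
    have : Differentiable ℝ A := fun x => (h x).differentiableAt
    exact cont_entry this.continuous i j
  have hg'c : Continuous fun x => A' x i j := cont_entry hA' i j
  have hd : ∀ x : ℝ, HasDerivAt (fun y => A y i j * Complex.exp (-(Complex.I) * (m:ℂ) * y))
      (A' x i j * Complex.exp (-(Complex.I) * (m:ℂ) * x)
        + A x i j * (-(Complex.I) * (m:ℂ) * Complex.exp (-(Complex.I) * (m:ℂ) * x))) x :=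
    fun x => (deriv_entry h i j x).mul (hasDerivAt_cexp m x)
  have hint := intervalIntegral.integral_eq_sub_of_hasDerivAt (a := 0) (b := 2*Real.pi)
      (fun x _ => hd x) (Continuous.intervalIntegrable (by fun_prop) _ _)
  have h2 : A (2*Real.pi) = A 0 := by rw [← zero_add (2*Real.pi), hper]
  have hz : A (2*Real.pi) i j * Complex.exp (-(Complex.I) * (m:ℂ) * ((2*Real.pi : ℝ):ℂ))
        - A 0 i j * Complex.exp (-(Complex.I) * (m:ℂ) * ((0:ℝ):ℂ)) = 0 := by
    have he : Complex.exp (-(Complex.I) * (m:ℂ) * ((2*Real.pi : ℝ):ℂ)) = 1 := by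
      rw [← expint m]; congr 1; push_cast; ring
    rw [h2, he]; simp
  rw [hz] at hint
  have hsplit : (∫ x in (0:ℝ)..(2*Real.pi),
      (A' x i j * Complex.exp (-(Complex.I) * (m:ℂ) * x)
        + A x i j * (-(Complex.I) * (m:ℂ) * Complex.exp (-(Complex.I) * (m:ℂ) * x))))
      = (∫ x in (0:ℝ)..(2*Real.pi), A' x i j * Complex.exp (-(Complex.I) * (m:ℂ) * x))
        + (-(Complex.I) * (m:ℂ)) *
          (∫ x in (0:ℝ)..(2*Real.pi), A x i j * Complex.exp (-(Complex.I) * (m:ℂ) * x)) := by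
    rw [intervalIntegral.integral_add (Continuous.intervalIntegrable (by fun_prop) _ _)
        (Continuous.intervalIntegrable (by fun_prop) _ _), ← intervalIntegral.integral_const_mul]
    congr 1; apply intervalIntegral.integral_congr; intro x _; ring
  rw [hsplit] at hint
  have key : (∫ x in (0:ℝ)..(2*Real.pi), A' x i j * Complex.exp (-(Complex.I) * (m:ℂ) * x))
      = (Complex.I * (m:ℂ)) *
        (∫ x in (0:ℝ)..(2*Real.pi), A x i j * Complex.exp (-(Complex.I) * (m:ℂ) * x)) := by
    linear_combination hint
  show (2 * Real.pi : ℂ)⁻¹ * _ = _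
  rw [key]; unfold fc; ring

variable (A1 A1' A0 B0 : ℝ → Matrix (Fin n) (Fin n) ℂ) (lam : ℂ)

lemma fcA11 (m : ℤ) (i k : Fin n) :
    fc (firstOrderA A1 A1' A0 B0 lam) m (Sum.inl i) (Sum.inl k) = 0 := by
  unfold fc firstOrderA
  simp

lemma fcA12 (m : ℤ) (i k : Fin n) :
    fc (firstOrderA A1 A1' A0 B0 lam) m (Sum.inl i) (Sum.inr k)
      = if m = 0 ∧ i = k then 1 else 0 := by
  unfold fc firstOrderA
  have hπ : (2 * Real.pi : ℂ) ≠ 0 := by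
    simp [Complex.ext_iff, Real.pi_ne_zero]
  by_cases hik : i = k
  · subst hik
    simp only [Matrix.fromBlocks_apply₁₂, Matrix.one_apply_eq, one_mul, intexp m]
    by_cases hm : m = 0 <;> simp [hm, hπ]
    · field_simp
  · simp [Matrix.one_apply, hik]

lemma fcA21 (hA0 : Continuous A0) (hB0 : Continuous B0) (hA1' : Continuous A1')
    (m : ℤ) (i k : Fin n) :
    fc (firstOrderA A1 A1' A0 B0 lam) m (Sum.inr i) (Sum.inl k)
      = lam * fc B0 m i k - fc A0 m i k - fc A1' m i k := by
  unfold fc firstOrderA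
  simp only [Matrix.fromBlocks_apply₂₁, Matrix.sub_apply, Matrix.smul_apply, smul_eq_mul]
  rw [show (∫ x in (0:ℝ)..(2*Real.pi),
      (lam * B0 x i k - A0 x i k - A1' x i k) * Complex.exp (-(Complex.I) * (m:ℂ) * x))
      = (∫ x in (0:ℝ)..(2*Real.pi),
        (lam * (B0 x i k * Complex.exp (-(Complex.I) * (m:ℂ) * x))
          - A0 x i k * Complex.exp (-(Complex.I) * (m:ℂ) * x)
          - A1' x i k * Complex.exp (-(Complex.I) * (m:ℂ) * x))) from
    intervalIntegral.integral_congr fun x _ => by ring]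
  rw [intervalIntegral.integral_sub, intervalIntegral.integral_sub,
    intervalIntegral.integral_const_mul]
  · ring
  · exact Continuous.intervalIntegrable
      (by have := cont_entry hB0 i k; fun_prop) _ _
  · exact Continuous.intervalIntegrable
      (by have := cont_entry hA0 i k; fun_prop) _ _
  · apply IntervalIntegrable.sub
    · exact Continuous.intervalIntegrable
        (by have := cont_entry hB0 i k; fun_prop) _ _
    · exact Continuous.intervalIntegrable
        (by have := cont_entry hA0 i k; fun_prop) _ _
  · exact Continuous.intervalIntegrable
      (by have := cont_entry hA1' i k; fun_prop) _ _

lemma fcA22 (m : ℤ) (i k : Fin n) :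
    fc (firstOrderA A1 A1' A0 B0 lam) m (Sum.inr i) (Sum.inr k) = -(fc A1 m i k) := by
  unfold fc firstOrderA
  simp only [Matrix.fromBlocks_apply₂₂, Matrix.neg_apply, neg_mul,
    intervalIntegral.integral_neg, mul_neg]

lemma jv_sub_eq_zero {J : ℕ} (a b : Fin (2*J+1)) : jv J a - jv J b = 0 ↔ a = b := by
  unfold jv
  constructor
  · intro h
    have : (a : ℕ) = (b : ℕ) := by omega
    exact Fin.ext this
  · rintro rfl; ring

end Aux

/-- The truncated first-order Birman–Schwinger Evans function
`F_J(λ) = det(I − 𝒦̂_J(λ)) e^{tr 𝒦̂_J(λ)}` satisfies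
`det(𝒟_J − I)² F_J(λ) = det ℬ₀,J · e^{tr 𝒦̂_J(λ)} · det(L_J − λ)`. -/
theorem first_order_truncated_evans_factorization
    (n : ℕ) (hn : 1 ≤ n) (J : ℕ) (lam : ℂ)
    (A1 A1' A0 B0 : ℝ → Matrix (Fin n) (Fin n) ℂ)
    (hA1 : ∀ x : ℝ, HasDerivAt A1 (A1' x) x) (hA1' : Continuous A1')
    (hA0 : Continuous A0) (hB0 : Continuous B0)
    (hA1per : ∀ x : ℝ, A1 (x + 2 * Real.pi) = A1 x)
    (hA0per : ∀ x : ℝ, A0 (x + 2 * Real.pi) = A0 x)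
    (hB0per : ∀ x : ℝ, B0 (x + 2 * Real.pi) = B0 x)
    (hB : IsUnit (blockToeplitz J n (fc B0)))
    (LJ : Matrix (Fin (2 * J + 1) × Fin n) (Fin (2 * J + 1) × Fin n) ℂ)
    (hLJ : LJ = (blockToeplitz J n (fc B0))⁻¹ *
      ((fourierD J n) ^ 2 + fourierD J n * blockToeplitz J n (fc A1) +
        blockToeplitz J n (fc A0))) :
    (fourierD J n - 1).det ^ 2 *
        ((1 - KhatJ J A1 A1' A0 B0 lam).det *
          Complex.exp ((KhatJ J A1 A1' A0 B0 lam).trace)) =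
      (blockToeplitz J n (fc B0)).det *
        Complex.exp ((KhatJ J A1 A1' A0 B0 lam).trace) * (LJ - lam • 1).det := by
  classical
  set f : Fin (2*J+1) → ℂ := fun a => Complex.I * ((jv J a : ℤ) : ℂ) - 1 with hf
  have hc0 : ∀ a, f a ≠ 0 := by
    intro a h
    rw [hf, sub_eq_zero] at h
    have := congrArg Complex.re h
    simp [Complex.mul_re] at this
  set AA : Matrix (Fin (2*J+1) × (Fin n ⊕ Fin n)) (Fin (2*J+1) × (Fin n ⊕ Fin n)) ℂ :=
    fun p q => fc (firstOrderA A1 A1' A0 B0 lam) (jv J p.1 - jv J q.1) p.2 q.2 with hAA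
  set DD : Matrix (Fin (2*J+1) × (Fin n ⊕ Fin n)) (Fin (2*J+1) × (Fin n ⊕ Fin n)) ℂ :=
    Matrix.diagonal (fun p => Complex.I * ((jv J p.1 : ℤ) : ℂ)) with hDD
  -- Step 1: factor `1 - K` through the diagonal of `(ij - 1)⁻¹`
  have hfact : (1 : Matrix _ _ ℂ) - KhatJ J A1 A1' A0 B0 lam
      = Matrix.diagonal (fun p => (f p.1)⁻¹) * (DD - AA) := by
    ext p q
    rw [Matrix.diagonal_mul]
    simp only [Matrix.sub_apply]
    simp only [Matrix.sub_apply, Matrix.one_apply, KhatJ, hAA, hDD, hf,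
      Matrix.diagonal_apply]
    by_cases hpq : p = q
    · subst hpq
      simp only [if_pos rfl, eq_self_iff_true, if_true]
      have := hc0 p.1
      rw [hf] at this
      field_simp
      ring
    · simp only [if_neg hpq]
      ring
  have hdet1 : ((1 : Matrix _ _ ℂ) - KhatJ J A1 A1' A0 B0 lam).det
      = (∏ p : Fin (2*J+1) × (Fin n ⊕ Fin n), (f p.1)⁻¹) * (DD - AA).det := by
    rw [hfact, Matrix.det_mul, Matrix.det_diagonal]
  -- Step 2: determinant of `fourierD - 1`
  have hDdet : (fourierD J n - 1).det = ∏ p : Fin (2*J+1) × Fin n, f p.1 := by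
    rw [show fourierD J n - 1 = Matrix.diagonal (fun p : Fin (2*J+1) × Fin n => f p.1) from ?_,
      Matrix.det_diagonal]
    rw [fourierD, ← Matrix.diagonal_one, Matrix.diagonal_sub]
  -- Step 3: product cancellation
  have h1 : (∏ p : Fin (2*J+1) × (Fin n ⊕ Fin n), (f p.1)⁻¹) = ∏ a, ((f a)⁻¹)^(n+n) := by
    rw [Fintype.prod_prod_type]
    refine Finset.prod_congr rfl fun a _ => ?_
    show (∏ _y : Fin n ⊕ Fin n, (f a)⁻¹) = _
    rw [Finset.prod_const, Finset.card_univ, Fintype.card_sum, Fintype.card_fin]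
  have h2 : (∏ p : Fin (2*J+1) × Fin n, f p.1) = ∏ a, (f a)^n := by
    rw [Fintype.prod_prod_type]
    refine Finset.prod_congr rfl fun a _ => ?_
    show (∏ _y : Fin n, f a) = _
    rw [Finset.prod_const, Finset.card_univ, Fintype.card_fin]
  have hcancel : (∏ p : Fin (2*J+1) × Fin n, f p.1)^2 *
      (∏ p : Fin (2*J+1) × (Fin n ⊕ Fin n), (f p.1)⁻¹) = 1 := by
    rw [h1, h2, ← Finset.prod_pow, ← Finset.prod_mul_distrib]
    refine Finset.prod_eq_one fun a _ => ?_
    rw [← pow_mul, inv_pow, show n*2 = n+n from by ring]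
    exact mul_inv_cancel₀ (pow_ne_zero _ (hc0 a))
  -- Step 4: reindexing to a 2×2 block structure
  let e : ((Fin (2*J+1) × Fin n) ⊕ (Fin (2*J+1) × Fin n)) ≃ (Fin (2*J+1) × (Fin n ⊕ Fin n)) :=
    ⟨Sum.elim (fun p => (p.1, Sum.inl p.2)) (fun p => (p.1, Sum.inr p.2)),
      fun p => Sum.elim (fun i => Sum.inl (p.1, i)) (fun i => Sum.inr (p.1, i)) p.2,
      by rintro (⟨a,i⟩|⟨a,i⟩) <;> rfl, by rintro ⟨a, i|i⟩ <;> rfl⟩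
  set T1 := blockToeplitz J n (fc A1) with hT1
  set T0 := blockToeplitz J n (fc A0) with hT0
  set TB := blockToeplitz J n (fc B0) with hTB
  set D := fourierD J n with hD
  set S := lam • TB with hS
  set CC := T0 + D * T1 - T1 * D - S with hCC
  set W := D + T1 with hW
  have hblocks : (DD - AA).submatrix e e = Matrix.fromBlocks D (-1) CC W := by
    ext p q
    rcases p with ⟨a,i⟩|⟨a,i⟩ <;> rcases q with ⟨b,k⟩|⟨b,k⟩
    · -- (1,1)
      show (DD - AA) (a, Sum.inl i) (b, Sum.inl k) = D (a,i) (b,k)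
      simp only [Matrix.sub_apply]
      simp only [Matrix.sub_apply, hAA, hDD, hD, fourierD, Matrix.diagonal_apply,
        fcA11, Prod.mk.injEq, Sum.inl.injEq, sub_zero]
    · -- (1,2)
      show (DD - AA) (a, Sum.inl i) (b, Sum.inr k) = (-1 : Matrix _ _ ℂ) (a,i) (b,k)
      simp only [Matrix.sub_apply]
      simp only [Matrix.sub_apply, hAA, hDD, Matrix.diagonal_apply, fcA12,
        Matrix.neg_apply, Matrix.one_apply, Prod.mk.injEq, Sum.inl.injEq, jv_sub_eq_zero,
        reduceCtorEq, and_false, if_false, zero_sub]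
    · -- (2,1)
      show (DD - AA) (a, Sum.inr i) (b, Sum.inl k) = CC (a,i) (b,k)
      rw [Matrix.sub_apply]
      rw [show AA (a, Sum.inr i) (b, Sum.inl k)
          = fc (firstOrderA A1 A1' A0 B0 lam) (jv J a - jv J b) (Sum.inr i) (Sum.inl k) from rfl]
      rw [fcA21 A1 A1' A0 B0 lam hA0 hB0 hA1' (jv J a - jv J b) i k]
      rw [fc_deriv hA1 hA1' hA1per (jv J a - jv J b) i k]
      have hdd : DD (a, Sum.inr i) (b, Sum.inl k) = 0 := by
        rw [hDD, Matrix.diagonal_apply_ne]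
        simp
      rw [hdd, hCC, hS, hT0, hT1, hTB, hD]
      simp only [Matrix.sub_apply, Matrix.add_apply, Matrix.smul_apply, fourierD,
        Matrix.diagonal_mul, Matrix.mul_diagonal, blockToeplitz, smul_eq_mul]
      push_cast
      ring
    · -- (2,2)
      show (DD - AA) (a, Sum.inr i) (b, Sum.inr k) = W (a,i) (b,k)
      rw [Matrix.sub_apply]
      rw [show AA (a, Sum.inr i) (b, Sum.inr k)
          = fc (firstOrderA A1 A1' A0 B0 lam) (jv J a - jv J b) (Sum.inr i) (Sum.inr k) from rfl]
      rw [fcA22 A1 A1' A0 B0 lam (jv J a - jv J b) i k, hW, hT1, hD]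
      simp only [Matrix.add_apply, hDD, fourierD, Matrix.diagonal_apply, blockToeplitz,
        Prod.mk.injEq, Sum.inr.injEq, sub_neg_eq_add]
  -- Step 5: block determinant manipulation
  set M := D^2 + D*T1 + T0 - S with hM
  have hdetB : IsUnit TB.det := (Matrix.isUnit_iff_isUnit_det TB).mp hB
  have hMB : TB * (LJ - lam • 1) = M := by
    rw [hLJ, Matrix.mul_sub, ← Matrix.mul_assoc, Matrix.mul_nonsing_inv _ hdetB,
      Matrix.one_mul, mul_smul_comm, Matrix.mul_one, hM, hS]
  have hTmul : Matrix.fromBlocks (1 : Matrix (Fin (2*J+1) × Fin n) (Fin (2*J+1) × Fin n) ℂ)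
      0 (D - 1) 1 * Matrix.fromBlocks 1 1 0 1 = Matrix.fromBlocks 1 1 (D-1) D := by
    rw [Matrix.fromBlocks_multiply]
    simp only [Matrix.one_mul, Matrix.mul_one, Matrix.zero_mul, Matrix.mul_zero,
      add_zero, zero_add]
    rw [sub_add_cancel]
  have hdetT : (Matrix.fromBlocks (1 : Matrix (Fin (2*J+1) × Fin n) (Fin (2*J+1) × Fin n) ℂ)
      1 (D-1) D).det = 1 := by
    rw [← hTmul, Matrix.det_mul, Matrix.det_fromBlocks_zero₁₂, Matrix.det_fromBlocks_zero₂₁]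
    simp
  have hGT : Matrix.fromBlocks D (-1) CC W * Matrix.fromBlocks 1 1 (D-1) D
      = Matrix.fromBlocks 1 0 (M - W) M := by
    rw [Matrix.fromBlocks_multiply]
    have b11 : D * 1 + (-1) * (D - 1)
        = (1 : Matrix (Fin (2*J+1) × Fin n) (Fin (2*J+1) × Fin n) ℂ) := by noncomm_ring
    have b12 : D * 1 + (-1) * D
        = (0 : Matrix (Fin (2*J+1) × Fin n) (Fin (2*J+1) × Fin n) ℂ) := by noncomm_ring
    have b21 : CC * 1 + W * (D - 1) = M - W := by rw [hCC, hW, hM]; noncomm_ring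
    have b22 : CC * 1 + W * D = M := by rw [hCC, hW, hM]; noncomm_ring
    rw [b11, b12, b21, b22]
  have hdetG : (DD - AA).det = TB.det * (LJ - lam • 1).det := by
    have h3 : (DD - AA).det = (Matrix.fromBlocks D (-1) CC W).det := by
      rw [← Matrix.det_submatrix_equiv_self e, hblocks]
    rw [h3, ← mul_one (Matrix.fromBlocks D (-1) CC W).det, ← hdetT, ← Matrix.det_mul, hGT,
      Matrix.det_fromBlocks_zero₁₂, Matrix.det_one, one_mul, ← hMB, Matrix.det_mul]
  -- Final assembly
  rw [hdet1, hDdet, hdetG]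
  linear_combination (TB.det * (LJ - lam • 1).det *
    Complex.exp ((KhatJ J A1 A1' A0 B0 lam).trace)) * hcancel
end

section
/- Fix n ≥ 1, J ∈ ℕ, λ ∈ ℂ, and families (Â₁,_m), (Â₀,_m), (B̂₀,_m) of n×n complex matrices. With 𝒦_J(λ) := −(𝒟_J² − I)^{-1}(𝒟_J𝒜₁,J + 𝒜₀,J − λℬ₀,J + I) in the notation below, one has tr 𝒦_J(λ) = ( tr Â₀,₀ + n − λ·tr B̂₀,₀ ) · ∑_{|j|≤J} 1/(j² + 1). In particular, the contributions of Â₁,₀ cancel by oddness of j ↦ ij/(j²+1). -/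
open Complex Matrix Finset

lemma den_ne (j : ℤ) : ((j : ℂ))^2 + 1 ≠ 0 := by
  have : ((j : ℂ))^2 + 1 = ((j^2 + 1 : ℤ) : ℂ) := by push_cast; ring
  rw [this]
  exact_mod_cast (by positivity : (j^2 + 1 : ℤ) ≠ 0)

lemma sum_fin_eq_icc (J : ℕ) (f : ℤ → ℂ) :
    ∑ a : Fin (2 * J + 1), f (jv J a) = ∑ j ∈ Finset.Icc (-(J:ℤ)) (J:ℤ), f j := by
  refine Finset.sum_nbij' (fun a => jv J a)
    (fun z => (⟨min (z + J).toNat (2*J), by omega⟩ : Fin (2*J+1))) ?_ ?_ ?_ ?_ ?_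
  · intro a _; simp [jv, mem_Icc]; omega
  · intro z hz; exact mem_univ _
  · intro a _
    have := a.isLt
    apply Fin.ext
    simp [jv]; omega
  · intro z hz; simp [mem_Icc] at hz; simp [jv]; omega
  · intro a _; rfl

lemma odd_sum_zero (J : ℕ) :
    ∑ j ∈ Finset.Icc (-(J:ℤ)) (J:ℤ), Complex.I * (j:ℂ) * (((j:ℂ))^2 + 1)⁻¹ = 0 := by
  apply Finset.sum_involution (fun j _ => -j)
  · intro a ha
    have h1 := den_ne a
    have h2 := den_ne (-a)
    push_cast at h2 ⊢
    field_simp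
    ring
  · intro a ha hf h
    apply hf
    have : a = 0 := by omega
    simp [this]
  · intro a ha; ring
  · intro a ha; simp [mem_Icc] at *; omega

lemma Dsq_inv (J n : ℕ) :
    ((fourierD J n) ^ 2 - 1)⁻¹ =
      Matrix.diagonal (fun p => (-((((jv J p.1 : ℤ) : ℂ))^2 + 1))⁻¹) := by
  have h : (fourierD J n) ^ 2 - 1 =
      Matrix.diagonal (fun p => -((((jv J p.1 : ℤ) : ℂ))^2 + 1)) := by
    rw [sq, fourierD, Matrix.diagonal_mul_diagonal, ← Matrix.diagonal_one,
      Matrix.diagonal_sub]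
    apply congrArg Matrix.diagonal
    funext p
    linear_combination (((jv J p.1 : ℤ) : ℂ))^2 * Complex.I_mul_I
  rw [h]
  apply Matrix.inv_eq_right_inv
  rw [Matrix.diagonal_mul_diagonal, ← Matrix.diagonal_one]
  apply congrArg Matrix.diagonal
  funext p
  exact mul_inv_cancel₀ (neg_ne_zero.mpr (den_ne _))

/-- The trace of the truncated second-order Birman–Schwinger
matrix is `tr 𝒦_J(λ) = (tr Â₀,₀ + n − λ tr B̂₀,₀) ∑_{|j|≤J} 1/(j²+1)`; the
contributions of `Â₁,₀` cancel by oddness of `j ↦ ij/(j²+1)`. -/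
theorem trace_of_truncated_second_order_BS
    (n : ℕ) (hn : 1 ≤ n) (J : ℕ) (lam : ℂ)
    (A1 A0 B0 : ℤ → Matrix (Fin n) (Fin n) ℂ) :
    (KJ J n A1 A0 B0 lam).trace =
      ((A0 0).trace + (n : ℂ) - lam * (B0 0).trace) *
        ∑ j ∈ Finset.Icc (-(J : ℤ)) (J : ℤ), (((j : ℂ)) ^ 2 + 1)⁻¹ := by
  set M := fourierD J n * blockToeplitz J n A1 +
      (blockToeplitz J n A0 - lam • blockToeplitz J n B0) + 1 with hMdef
  have hdiag : ∀ p : Fin (2*J+1) × Fin n,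
      M p p = Complex.I * ((jv J p.1 : ℤ) : ℂ) * A1 0 p.2 p.2
        + (A0 0 p.2 p.2 - lam * B0 0 p.2 p.2) + 1 := by
    intro p
    simp [hMdef, Matrix.add_apply, Matrix.sub_apply, Matrix.smul_apply,
      fourierD, Matrix.diagonal_mul, blockToeplitz, Matrix.one_apply_eq, smul_eq_mul]
  have h1 : (KJ J n A1 A0 B0 lam).trace
      = ∑ p : Fin (2*J+1) × Fin n, ((((jv J p.1 : ℤ) : ℂ))^2 + 1)⁻¹ *
          (Complex.I * ((jv J p.1 : ℤ) : ℂ) * A1 0 p.2 p.2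
            + (A0 0 p.2 p.2 - lam * B0 0 p.2 p.2) + 1) := by
    rw [KJ, Matrix.trace_neg, Dsq_inv, ← hMdef, Matrix.trace, ← Finset.sum_neg_distrib]
    apply Finset.sum_congr rfl
    intro p _
    rw [Matrix.diag, Matrix.diagonal_mul, hdiag p, inv_neg, neg_mul, neg_neg]
  rw [h1, Fintype.sum_prod_type]
  have h2 : ∀ a : Fin (2*J+1),
      (∑ i : Fin n, ((((jv J a : ℤ) : ℂ))^2 + 1)⁻¹ *
        (Complex.I * ((jv J a : ℤ) : ℂ) * A1 0 i i
          + (A0 0 i i - lam * B0 0 i i) + 1))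
      = (A1 0).trace * (Complex.I * ((jv J a : ℤ) : ℂ) * ((((jv J a : ℤ) : ℂ))^2 + 1)⁻¹)
        + ((A0 0).trace + (n : ℂ) - lam * (B0 0).trace) * ((((jv J a : ℤ) : ℂ))^2 + 1)⁻¹ := by
    intro a
    rw [← Finset.mul_sum, Finset.sum_add_distrib, Finset.sum_add_distrib,
      Finset.sum_sub_distrib, ← Finset.mul_sum, ← Finset.mul_sum, Finset.sum_const,
      Finset.card_univ, Fintype.card_fin, nsmul_eq_mul, mul_one]
    have hA1 : ∑ i : Fin n, A1 0 i i = (A1 0).trace := rfl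
    have hA0 : ∑ i : Fin n, A0 0 i i = (A0 0).trace := rfl
    have hB0 : ∑ i : Fin n, B0 0 i i = (B0 0).trace := rfl
    rw [hA1, hA0, hB0]
    ring
  rw [Finset.sum_congr rfl (fun a _ => h2 a), Finset.sum_add_distrib,
    ← Finset.mul_sum, ← Finset.mul_sum]
  rw [sum_fin_eq_icc J (fun j => Complex.I * (j:ℂ) * (((j:ℂ))^2 + 1)⁻¹),
    sum_fin_eq_icc J (fun j => (((j:ℂ))^2 + 1)⁻¹), odd_sum_zero, mul_zero, zero_add]
end

section
/- Fix n ≥ 1, J ∈ ℕ, λ ∈ ℂ. In the notation below, the trace of the truncated first-order Birman–Schwinger matrix satisfies tr 𝒦̂_J(λ) = −( tr Â₁,₀ + 2n ) · ∑_{|j|≤J} 1/(ij − 1) = ( tr Â₁,₀ + 2n ) · ( 1 + ∑_{j=1}^{J} 2/(j² + 1) ); in particular it is independent of λ. -/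
open Complex Matrix Finset

attribute [local instance] Matrix.normedAddCommGroup Matrix.normedSpace

lemma nz_aux (m : ℤ) : Complex.I * (m : ℂ) - 1 ≠ 0 := by
  intro h
  have := congrArg Complex.re h
  simp [Complex.mul_re] at this

lemma pair_aux (m : ℤ) :
    (Complex.I * (m : ℂ) - 1)⁻¹ + (Complex.I * ((-m : ℤ) : ℂ) - 1)⁻¹
      = -(2 * (((m : ℂ)) ^ 2 + 1)⁻¹) := by
  have h1 := nz_aux m
  have h2 : (-1 - Complex.I * (m : ℂ)) ≠ 0 := by
    have := nz_aux (-m); push_cast at this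
    intro h; apply this; linear_combination h
  have h3 : ((m : ℂ)) ^ 2 + 1 ≠ 0 := by
    have : ((m ^ 2 + 1 : ℤ) : ℂ) ≠ 0 := by
      exact_mod_cast (by positivity : (m:ℤ) ^ 2 + 1 ≠ 0)
    push_cast at this; exact this
  push_cast
  rw [show Complex.I * -(m:ℂ) - 1 = -1 - Complex.I * (m:ℂ) by ring]
  field_simp
  ring_nf
  simp [Complex.I_sq]
  ring

lemma sum_key_aux (J : ℕ) :
    ∑ j ∈ Finset.Icc (-(J : ℤ)) (J : ℤ), (Complex.I * (j : ℂ) - 1)⁻¹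
      = -(1 + ∑ j ∈ Finset.Icc 1 J, 2 * (((j : ℂ)) ^ 2 + 1)⁻¹) := by
  induction J with
  | zero => norm_num
  | succ J ih =>
      have hins : Finset.Icc (-(J + 1 : ℤ)) (J + 1 : ℤ)
          = insert (-(J + 1 : ℤ)) (insert ((J + 1 : ℤ)) (Finset.Icc (-(J : ℤ)) (J : ℤ))) := by
        ext x; simp only [Finset.mem_Icc, Finset.mem_insert]; omega
      push_cast at hins ⊢
      rw [hins, Finset.sum_insert (by simp only [Finset.mem_insert, Finset.mem_Icc]; omega),
        Finset.sum_insert (by simp only [Finset.mem_insert, Finset.mem_Icc]; omega), ih,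
        Finset.sum_Icc_succ_top (by omega : 1 ≤ J + 1)]
      have := pair_aux ((J : ℤ) + 1)
      push_cast at this
      push_cast
      linear_combination this

lemma trace_aux
    (n : ℕ) (J : ℕ) (lam : ℂ)
    (A1 A1' A0 B0 : ℝ → Matrix (Fin n) (Fin n) ℂ) :
    (KhatJ J A1 A1' A0 B0 lam).trace =
      (∑ j ∈ Finset.Icc (-(J : ℤ)) (J : ℤ), (Complex.I * (j : ℂ) - 1)⁻¹) *
        (-((fc A1 0).trace + 2 * (n : ℂ))) := by
  have h0 : ∀ i : Fin n,
      fc (firstOrderA A1 A1' A0 B0 lam) 0 (Sum.inl i) (Sum.inl i) = 0 := by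
    intro i
    simp [fc, firstOrderA]
  have h1 : ∀ i : Fin n,
      fc (firstOrderA A1 A1' A0 B0 lam) 0 (Sum.inr i) (Sum.inr i) = -(fc A1 0 i i) := by
    intro i
    simp only [fc, firstOrderA, Matrix.fromBlocks_apply₂₂, Matrix.neg_apply, neg_mul,
      intervalIntegral.integral_neg, mul_neg]
  have hinner : ∀ a : Fin (2 * J + 1),
      ∑ s : Fin n ⊕ Fin n, KhatJ J A1 A1' A0 B0 lam (a, s) (a, s)
        = (Complex.I * ((jv J a : ℤ) : ℂ) - 1)⁻¹ * (-((fc A1 0).trace + 2 * (n : ℂ))) := by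
    intro a
    rw [Fintype.sum_sum_type]
    simp only [KhatJ, sub_self, if_pos rfl, h0, h1]
    rw [← Finset.mul_sum, ← Finset.mul_sum, ← mul_add]
    congr 1
    simp only [Matrix.trace, Matrix.diag, Finset.sum_sub_distrib, Finset.sum_const,
      Finset.card_univ, Fintype.card_fin, nsmul_eq_mul, Finset.sum_neg_distrib, if_true]
    norm_num
    ring
  have hre : ∑ j ∈ Finset.Icc (-(J : ℤ)) (J : ℤ), (Complex.I * (j : ℂ) - 1)⁻¹
      = ∑ a : Fin (2 * J + 1), (Complex.I * ((jv J a : ℤ) : ℂ) - 1)⁻¹ := by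
    have hmap : Finset.Icc (-(J : ℤ)) (J : ℤ)
        = (Finset.range (2 * J + 1)).map ⟨fun k : ℕ => (k : ℤ) - J, fun a b h => by exact_mod_cast sub_left_inj.mp h⟩ := by
      ext x
      simp only [Finset.mem_Icc, Finset.mem_map, Finset.mem_range, Function.Embedding.coeFn_mk]
      constructor
      · intro h; exact ⟨(x + J).toNat, by omega, by show (((x + J).toNat : ℕ) : ℤ) - J = x; omega⟩
      · rintro ⟨k, hk, rfl⟩; show -(J : ℤ) ≤ (k : ℤ) - J ∧ (k : ℤ) - J ≤ J; omega
    rw [hmap, Finset.sum_map, ← Fin.sum_univ_eq_sum_range]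
    rfl
  rw [Matrix.trace]
  unfold Matrix.diag
  rw [Fintype.sum_prod_type]
  simp only [hinner]
  rw [← Finset.sum_mul, hre]

/-- The trace of the truncated first-order Birman–Schwinger
matrix satisfies
`tr 𝒦̂_J(λ) = −(tr Â₁,₀ + 2n) ∑_{|j|≤J} 1/(ij−1) = (tr Â₁,₀ + 2n)(1 + ∑_{j=1}^J 2/(j²+1))`;
in particular it is independent of `λ`. -/
theorem trace_of_truncated_first_order_BS
    (n : ℕ) (hn : 1 ≤ n) (J : ℕ) (lam : ℂ)
    (A1 A1' A0 B0 : ℝ → Matrix (Fin n) (Fin n) ℂ)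
    (hA1 : ∀ x : ℝ, HasDerivAt A1 (A1' x) x) (hA1' : Continuous A1')
    (hA0 : Continuous A0) (hB0 : Continuous B0)
    (hA1per : ∀ x : ℝ, A1 (x + 2 * Real.pi) = A1 x)
    (hA0per : ∀ x : ℝ, A0 (x + 2 * Real.pi) = A0 x)
    (hB0per : ∀ x : ℝ, B0 (x + 2 * Real.pi) = B0 x) :
    (KhatJ J A1 A1' A0 B0 lam).trace =
        -(((fc A1 0).trace + 2 * (n : ℂ)) *
          ∑ j ∈ Finset.Icc (-(J : ℤ)) (J : ℤ), (Complex.I * (j : ℂ) - 1)⁻¹)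
      ∧ (KhatJ J A1 A1' A0 B0 lam).trace =
        ((fc A1 0).trace + 2 * (n : ℂ)) *
          (1 + ∑ j ∈ Finset.Icc 1 J, 2 * (((j : ℂ)) ^ 2 + 1)⁻¹) := by
  have ht := trace_aux n J lam A1 A1' A0 B0
  refine ⟨by rw [ht]; ring, ?_⟩
  rw [ht, sum_key_aux]
  ring
end
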